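/- For every n ≥ 1 and all nonnegative integers a, b, c, the number of Stirling permutations w of size n with asc(w) = a, des(w) = b and plat(w) = c is invariant under any permutation of the triple (a, b, c); for example, it equals the number of Stirling permutations w of size n with asc(w) = b, des(w) = c and plat(w) = a. -/

import Mathlib

open Finset
open scoped Classical

/-- Number of descents of a word `w` of length `N` over a linearly ordered
alphabet.  Positions are 0-indexed: a position `i` is a descent if it is the
last position or the letter at `i` is greater than the letter at `i + 1`. -/
noncomputable def desW {α : Type*} [LinearOrder α] {N : ℕ} (w : Fin N → α) : ℕ :=
  (univ.filter fun i : Fin N =>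
    (i : ℕ) + 1 = N ∨ ∃ h : (i : ℕ) + 1 < N, w ⟨(i : ℕ) + 1, h⟩ < w i).card

/-- Number of ascents of a word `w` of length `N`: ascent indices range over
`{0, …, N-1}`; the index `0` is always an ascent, and an index `1 ≤ i ≤ N-1`
is an ascent if the `i`-th letter is smaller than the `(i+1)`-st one
(0-indexed: `w (i-1) < w i`). -/
noncomputable def ascW {α : Type*} [LinearOrder α] {N : ℕ} (w : Fin N → α) : ℕ :=
  (univ.filter fun i : Fin N =>
    (i : ℕ) = 0 ∨ w ⟨(i : ℕ) - 1, lt_of_le_of_lt (Nat.sub_le _ _) i.isLt⟩ < w i).card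

/-- Number of plateaus of a word `w` of length `N`: positions `i` (1-indexed,
`1 ≤ i ≤ N-1`) whose letter equals the next letter. -/
noncomputable def platW {α : Type*} [DecidableEq α] {N : ℕ} (w : Fin N → α) : ℕ :=
  (univ.filter fun i : Fin N =>
    ∃ h : (i : ℕ) + 1 < N, w ⟨(i : ℕ) + 1, h⟩ = w i).card

/-- The set of Stirling permutations of size `n`, encoded as words
`w : Fin (2 * n) → Fin n` in which every letter occurs exactly twice and there
are no indices `i < j < l` with `w i = w l` and `w j < w i`
(avoidance of the pattern `212`). -/
noncomputable def stirlingSet (n : ℕ) : Finset (Fin (2 * n) → Fin n) :=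
  univ.filter fun w =>
    (∀ a : Fin n, (univ.filter fun i => w i = a).card = 2) ∧
    ∀ i j l : Fin (2 * n), i < j → j < l → w i = w l → ¬ w j < w i

def SPrel : Fin 3 → ℕ → ℕ → Prop
  | 0, x, y => x < y
  | 1, x, y => y < x
  | 2, x, y => x = y

def SPT (t : Fin 3) (W : ℕ → ℕ) (j : ℕ) : Prop :=
  if j = 0 then t = 0 else SPrel t (W (j-1)) (W j)

lemma SPrel_zero (x y : ℕ) : SPrel 0 x y ↔ x < y := Iff.rfl
lemma SPrel_one (x y : ℕ) : SPrel 1 x y ↔ y < x := Iff.rfl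
lemma SPrel_two (x y : ℕ) : SPrel 2 x y ↔ x = y := Iff.rfl

def SPins (W : ℕ → ℕ) (g v : ℕ) : ℕ → ℕ := fun j =>
  if j < g then W j else if j < g + 2 then v else W (j - 2)

lemma SPT_cases (W : ℕ → ℕ) (g : ℕ) :
    (SPT 0 W g ∧ ¬ SPT 1 W g ∧ ¬ SPT 2 W g) ∨
    (¬ SPT 0 W g ∧ SPT 1 W g ∧ ¬ SPT 2 W g) ∨
    (¬ SPT 0 W g ∧ ¬ SPT 1 W g ∧ SPT 2 W g) := by
  by_cases h : g = 0
  · left; subst h; simp [SPT]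
  · simp only [SPT, h, if_false, SPrel_zero, SPrel_one, SPrel_two]
    rcases lt_trichotomy (W (g-1)) (W g) with h1 | h1 | h1
    · left; exact ⟨h1, by omega, by omega⟩
    · right; right; exact ⟨by omega, by omega, h1⟩
    · right; left; exact ⟨by omega, h1, by omega⟩

lemma SP_shift2 (P : ℕ → Prop) [DecidablePred P] (a b : ℕ) :
    ((Ico (a+2) (b+2)).filter P).card = ((Ico a b).filter fun j => P (j+2)).card := by
  have h : Ico (a+2) (b+2) = (Ico a b).image (· + 2) := by
    rw [Finset.image_add_right_Ico]
  rw [h, Finset.filter_image, Finset.card_image_of_injective _ (add_left_injective 2)]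

lemma SP_split (P : ℕ → Prop) [DecidablePred P] (g k M : ℕ) (h : g + k ≤ M) :
    ((range M).filter P).card
      = ((range g).filter P).card + ((Ico g (g+k)).filter P).card
        + ((Ico (g+k) M).filter P).card := by
  have h1 : range M = Ico 0 g ∪ (Ico g (g+k) ∪ Ico (g+k) M) := by
    rw [Finset.Ico_union_Ico_eq_Ico (by omega) h, Finset.Ico_union_Ico_eq_Ico (by omega) (by omega)]
    rw [Finset.range_eq_Ico]
  have d1 : Disjoint ((Ico g (g+k)).filter P) ((Ico (g+k) M).filter P) :=
    Finset.disjoint_filter_filter (Finset.Ico_disjoint_Ico_consecutive g (g+k) M)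
  have d2 : Disjoint ((Ico 0 g).filter P) (((Ico g (g+k)) ∪ (Ico (g+k) M)).filter P) := by
    refine Finset.disjoint_filter_filter (Finset.disjoint_left.2 ?_)
    intro x hx hx'
    simp only [Finset.mem_Ico, Finset.mem_union] at hx hx'
    omega
  rw [h1, Finset.filter_union, Finset.card_union_of_disjoint d2, Finset.filter_union,
    Finset.card_union_of_disjoint d1, Finset.range_eq_Ico]
  ring

section core
variable (W : ℕ → ℕ) (N g v : ℕ)

lemma SPins_lt (j : ℕ) (h : j < g) : SPins W g v j = W j := by simp [SPins, h]
lemma SPins_mid (j : ℕ) (h1 : g ≤ j) (h2 : j < g + 2) : SPins W g v j = v := by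
  simp [SPins, h2, Nat.not_lt.2 h1]
lemma SPins_ge (j : ℕ) (h : g + 2 ≤ j) : SPins W g v j = W (j - 2) := by
  have h1 : ¬ j < g := by omega
  have h2 : ¬ j < g + 2 := by omega
  simp [SPins, h1, h2]

lemma SP_mid_types (hg : g ≤ N) (hv0 : 0 < v)
    (hv : ∀ i, i < N → 0 < W i ∧ W i < v) (hW0 : ∀ i, N ≤ i → W i = 0) (t : Fin 3) :
    (SPT t (SPins W g v) g ↔ t = 0) ∧ (SPT t (SPins W g v) (g+1) ↔ t = 2) ∧
      (SPT t (SPins W g v) (g+2) ↔ t = 1) := by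
  set W' := SPins W g v with hW'
  have e0 : W' g = v := SPins_mid W g v g le_rfl (by omega)
  have e1 : W' (g+1) = v := SPins_mid W g v (g+1) (by omega) (by omega)
  have e2 : W' (g+2) = W g := by
    have := SPins_ge W g v (g+2) le_rfl
    simpa using this
  have hWgv : W g < v := by
    by_cases h : g < N
    · exact (hv g h).2
    · rw [hW0 g (by omega)]; exact hv0
  refine ⟨?_, ?_, ?_⟩
  · by_cases h : g = 0
    · subst h; simp [SPT]
    · have em : W' (g-1) = W (g-1) := SPins_lt W g v _ (by omega)
      have hlt : W (g-1) < v := (hv (g-1) (by omega)).2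
      unfold SPT
      rw [if_neg h, em]
      fin_cases t <;> simp [SPrel, e0] <;> omega
  · have h1 : (g+1) - 1 = g := by omega
    unfold SPT
    rw [if_neg (by omega), h1, e0, e1]
    fin_cases t <;> simp [SPrel] <;> decide
  · have h1 : (g+2) - 1 = g+1 := by omega
    unfold SPT
    rw [if_neg (by omega), h1, e1, e2]
    fin_cases t <;> simp [SPrel] <;> omega

lemma SP_core (hg : g ≤ N) (hv0 : 0 < v)
    (hv : ∀ i, i < N → 0 < W i ∧ W i < v) (hW0 : ∀ i, N ≤ i → W i = 0) (t : Fin 3) :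
    ((range (N+3)).filter (SPT t (SPins W g v))).card + (if SPT t W g then 1 else 0)
      = ((range (N+1)).filter (SPT t W)).card + 1 := by
  set W' := SPins W g v with hW'
  obtain ⟨m0, m1, m2⟩ := SP_mid_types W N g v hg hv0 hv hW0 t
  -- low part congruence
  have hlow : (range g).filter (SPT t W') = (range g).filter (SPT t W) := by
    apply Finset.filter_congr
    intro x hx
    have hxg : x < g := Finset.mem_range.1 hx
    unfold SPT
    by_cases h0 : x = 0
    · simp [h0]
    · rw [if_neg h0, hW', SPins_lt W g v x hxg, SPins_lt W g v (x-1) (by omega)]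
      simp [h0]
  -- upper part
  have hup : ((Ico (g+3) (N+3)).filter (SPT t W')).card
      = ((Ico (g+1) (N+1)).filter (SPT t W)).card := by
    have h3 : g + 3 = (g+1) + 2 := by omega
    have h4 : N + 3 = (N+1) + 2 := by omega
    rw [h3, h4, SP_shift2]
    congr 1
    apply Finset.filter_congr
    intro x hx
    have hxr : g + 1 ≤ x ∧ x < N + 1 := by simpa [Finset.mem_Ico] using hx
    have e1 : W' (x+2) = W x := by
      have := SPins_ge W g v (x+2) (by omega)
      simpa using this
    have e2 : W' (x+1) = W (x-1) := by
      have := SPins_ge W g v (x+1) (by omega)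
      have h5 : x + 1 - 2 = x - 1 := by omega
      rwa [h5] at this
    unfold SPT
    rw [if_neg (by omega), if_neg (by omega)]
    have h6 : x + 2 - 1 = x + 1 := by omega
    rw [h6, e1, e2]
  -- middle parts
  have hI3 : Ico g (g+3) = ({g, g+1, g+2} : Finset ℕ) := by
    ext x
    simp only [Finset.mem_Ico, Finset.mem_insert, Finset.mem_singleton]
    omega
  have hmid : ((Ico g (g+3)).filter (SPT t W')).card = 1 := by
    rw [hI3]
    have hd : ({g, g+1, g+2} : Finset ℕ).filter (SPT t W')
        = {if t = 0 then g else if t = 2 then g + 1 else g + 2} := by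
      ext x
      simp only [Finset.mem_filter, Finset.mem_insert, Finset.mem_singleton]
      constructor
      · rintro ⟨h1 | h1 | h1, h2⟩ <;> subst h1
        · rw [m0.1 h2]; simp
        · rw [m1.1 h2]; simp
        · rw [m2.1 h2]
          have : (1 : Fin 3) ≠ 0 := by decide
          have : (1 : Fin 3) ≠ 2 := by decide
          simp_all
      · intro hx
        subst hx
        split_ifs with a1 a2
        · exact ⟨by simp, m0.2 a1⟩
        · exact ⟨by simp, m1.2 a2⟩
        · refine ⟨by simp, m2.2 ?_⟩
          fin_cases t <;> simp_all
    rw [hd, Finset.card_singleton]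
  have hmid1 : ((Ico g (g+1)).filter (SPT t W)).card = (if SPT t W g then 1 else 0) := by
    have : Ico g (g+1) = {g} := by
      ext x; simp only [Finset.mem_Ico, Finset.mem_singleton]; omega
    rw [this, Finset.filter_singleton]
    split_ifs <;> simp
  have L := SP_split (SPT t W') g 3 (N+3) (by omega)
  have R := SP_split (SPT t W) g 1 (N+1) (by omega)
  rw [L, R, hlow, hup, hmid, hmid1]
  omega
end core

/-! ### Padded words and insertion on actual words -/

noncomputable def SPpad {n N : ℕ} (w : Fin N → Fin n) : ℕ → ℕ := fun j =>
  if h : j < N then (w ⟨j, h⟩ : ℕ) + 1 else 0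

noncomputable def SPinsW {n : ℕ} (w : Fin (2*n) → Fin n) (g : Fin (2*n+1)) :
    Fin (2*(n+1)) → Fin (n+1) := fun i =>
  if h1 : (i : ℕ) < (g : ℕ) then (w ⟨i, by have := g.isLt; omega⟩).castSucc
  else if h2 : (i : ℕ) < (g : ℕ) + 2 then Fin.last n
  else (w ⟨(i : ℕ) - 2, by have := i.isLt; omega⟩).castSucc

lemma SPpad_ins {n : ℕ} (w : Fin (2*n) → Fin n) (g : Fin (2*n+1)) :
    SPpad (SPinsW w g) = SPins (SPpad w) (g : ℕ) (n+1) := by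
  have hgl := g.isLt
  funext j
  simp only [SPpad, SPins, SPinsW]
  by_cases hj : j < 2*(n+1)
  · rw [dif_pos hj]
    by_cases h1 : j < (g:ℕ)
    · rw [if_pos h1, dif_pos h1, dif_pos (show j < 2*n by omega)]
      simp
    · rw [if_neg h1, dif_neg h1]
      by_cases h2 : j < (g:ℕ)+2
      · rw [if_pos h2, dif_pos h2]
        simp [Fin.last]
      · rw [if_neg h2, dif_neg h2, dif_pos (show j - 2 < 2*n by omega)]
        simp
  · rw [dif_neg hj, if_neg (show ¬ j < (g:ℕ) by omega), if_neg (show ¬ j < (g:ℕ)+2 by omega),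
      dif_neg (show ¬ j - 2 < 2*n by omega)]

/-! ### Transfer between `Fin` filters and `range` filters -/

lemma SP_card_fin (M : ℕ) (p : ℕ → Prop) [DecidablePred p] :
    ((univ : Finset (Fin M)).filter fun i : Fin M => p (i : ℕ)).card = ((range M).filter p).card := by
  refine Finset.card_bij (fun (i : Fin M) _ => (i : ℕ)) ?_ ?_ ?_
  · intro a ha
    rw [Finset.mem_filter] at ha
    simp only [Finset.mem_filter, Finset.mem_range]
    exact ⟨a.isLt, ha.2⟩
  · intro a _ b _ h
    exact Fin.ext h
  · intro b hb
    rw [Finset.mem_filter, Finset.mem_range] at hb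
    exact ⟨⟨b, hb.1⟩, by simp [hb.2], rfl⟩

lemma SP_card_fin_succ (M : ℕ) (p : ℕ → Prop) [DecidablePred p] (h0 : ¬ p 0) :
    ((univ : Finset (Fin M)).filter fun i : Fin M => p ((i : ℕ)+1)).card
      = ((range (M+1)).filter p).card := by
  refine Finset.card_bij (fun (i : Fin M) _ => (i : ℕ) + 1) ?_ ?_ ?_
  · intro a ha
    rw [Finset.mem_filter] at ha
    simp only [Finset.mem_filter, Finset.mem_range]
    exact ⟨by have := a.isLt; omega, ha.2⟩
  · intro a _ b _ h
    have h' : (a:ℕ) + 1 = (b:ℕ) + 1 := h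
    exact Fin.ext (by omega)
  · intro b hb
    rw [Finset.mem_filter, Finset.mem_range] at hb
    have hb0 : b ≠ 0 := fun h => h0 (h ▸ hb.2)
    refine ⟨⟨b - 1, by omega⟩, ?_, by simp; omega⟩
    simp only [Finset.mem_filter, Finset.mem_univ, true_and]
    have hbb : b - 1 + 1 = b := by omega
    rw [hbb]
    exact hb.2

/-! ### original statistics as gap counts -/

lemma SPpad_lt {n N : ℕ} (w : Fin N → Fin n) (j : ℕ) (h : j < N) :
    SPpad w j = (w ⟨j, h⟩ : ℕ) + 1 := dif_pos h

lemma SPpad_ge {n N : ℕ} (w : Fin N → Fin n) (j : ℕ) (h : N ≤ j) :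
    SPpad w j = 0 := dif_neg (by omega)

lemma ascW_T {n N : ℕ} (hN : 1 ≤ N) (w : Fin N → Fin n) :
    ascW w = ((range (N+1)).filter (SPT 0 (SPpad w))).card := by
  have h1 : ((range (N+1)).filter (SPT 0 (SPpad w))).card
      = ((range N).filter (SPT 0 (SPpad w))).card := by
    rw [Finset.range_add_one, Finset.filter_insert, if_neg]
    unfold SPT
    rw [if_neg (by omega)]
    have h2 : SPpad w N = 0 := SPpad_ge w N le_rfl
    rw [SPrel_zero, h2]
    omega
  rw [h1, ← SP_card_fin]
  unfold ascW
  congr 1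
  apply Finset.filter_congr
  intro i _
  unfold SPT
  by_cases h0 : (i : ℕ) = 0
  · simp [h0]
  · rw [if_neg h0, SPrel_zero]
    simp only [h0, false_or]
    rw [SPpad_lt w _ (lt_of_le_of_lt (Nat.sub_le (i:ℕ) 1) i.isLt), SPpad_lt w _ i.isLt]
    simp only [Fin.eta]
    rw [Fin.lt_iff_val_lt_val]
    omega

lemma desW_T {n N : ℕ} (w : Fin N → Fin n) :
    desW w = ((range (N+1)).filter (SPT 1 (SPpad w))).card := by
  rw [← SP_card_fin_succ N _ (by unfold SPT; rw [if_pos rfl]; decide)]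
  unfold desW
  congr 1
  apply Finset.filter_congr
  intro i _
  unfold SPT
  rw [if_neg (by omega), SPrel_one]
  have hs : (i:ℕ) + 1 - 1 = (i:ℕ) := by omega
  rw [hs, SPpad_lt w _ i.isLt]
  by_cases hN : (i : ℕ) + 1 = N
  · rw [SPpad_ge w _ (by omega)]
    simp only [hN, true_or, true_iff]
    omega
  · rw [SPpad_lt w _ (by have := i.isLt; omega : (i:ℕ)+1 < N)]
    simp only [hN, false_or]
    constructor
    · rintro ⟨h, hlt⟩
      exact by exact_mod_cast Nat.add_lt_add_right hlt 1
    · intro h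
      exact ⟨by have := i.isLt; omega, by exact_mod_cast Nat.lt_of_add_lt_add_right h⟩

lemma platW_T {n N : ℕ} (w : Fin N → Fin n) :
    platW w = ((range (N+1)).filter (SPT 2 (SPpad w))).card := by
  rw [← SP_card_fin_succ N _ (by unfold SPT; rw [if_pos rfl]; decide)]
  unfold platW
  congr 1
  apply Finset.filter_congr
  intro i _
  unfold SPT
  rw [if_neg (by omega), SPrel_two]
  have hs : (i:ℕ) + 1 - 1 = (i:ℕ) := by omega
  rw [hs, SPpad_lt w _ i.isLt]
  by_cases hN : (i : ℕ) + 1 = N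
  · rw [SPpad_ge w _ (by omega)]
    simp only [hN]
    constructor
    · rintro ⟨h, _⟩; omega
    · intro h; omega
  · have hi1 : (i:ℕ)+1 < N := by have := i.isLt; omega
    rw [SPpad_lt w _ hi1]
    simp only [Fin.eta]
    constructor
    · rintro ⟨h, he⟩
      have h2 : (⟨(i:ℕ)+1, hi1⟩ : Fin N) = ⟨(i:ℕ)+1, h⟩ := Fin.ext rfl
      rw [h2, he]
    · intro h
      refine ⟨hi1, Fin.ext ?_⟩
      omega

lemma SP_occ_T {n N : ℕ} (w : Fin N → Fin n) (a : Fin n) :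
    ((univ : Finset (Fin N)).filter fun i => w i = a).card
      = ((range N).filter fun j => SPpad w j = (a:ℕ)+1).card := by
  rw [← SP_card_fin]
  congr 1
  apply Finset.filter_congr
  intro i _
  rw [SPpad_lt w _ i.isLt]
  simp only [Fin.eta]
  constructor
  · intro h; rw [h]
  · intro h; exact Fin.ext (by omega)

lemma SPpad_pos {n : ℕ} (w : Fin (2*n) → Fin n) :
    ∀ i, i < 2*n → 0 < SPpad w i ∧ SPpad w i < n+1 := by
  intro i hi
  rw [SPpad_lt w i hi]
  have := (w ⟨i, hi⟩).isLt
  omega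

lemma SP_T_ins {n : ℕ} (w : Fin (2*n) → Fin n) (g : Fin (2*n+1)) (t : Fin 3) :
    ((range (2*n+3)).filter (SPT t (SPpad (SPinsW w g)))).card
        + (if SPT t (SPpad w) (g:ℕ) then 1 else 0)
      = ((range (2*n+1)).filter (SPT t (SPpad w))).card + 1 := by
  rw [SPpad_ins]
  exact SP_core (SPpad w) (2*n) (g:ℕ) (n+1) (by have := g.isLt; omega) (by omega)
    (SPpad_pos w) (fun i hi => SPpad_ge w i hi) t

lemma ascW_ins {n : ℕ} (hn : 1 ≤ n) (w : Fin (2*n) → Fin n) (g : Fin (2*n+1)) :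
    ascW (SPinsW w g) + (if SPT 0 (SPpad w) (g:ℕ) then 1 else 0) = ascW w + 1 := by
  rw [ascW_T (by omega) (SPinsW w g), ascW_T (by omega) w,
    show 2*(n+1)+1 = 2*n+3 by ring]
  exact SP_T_ins w g 0

lemma desW_ins {n : ℕ} (w : Fin (2*n) → Fin n) (g : Fin (2*n+1)) :
    desW (SPinsW w g) + (if SPT 1 (SPpad w) (g:ℕ) then 1 else 0) = desW w + 1 := by
  rw [desW_T (SPinsW w g), desW_T w, show 2*(n+1)+1 = 2*n+3 by ring]
  exact SP_T_ins w g 1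

lemma platW_ins {n : ℕ} (w : Fin (2*n) → Fin n) (g : Fin (2*n+1)) :
    platW (SPinsW w g) + (if SPT 2 (SPpad w) (g:ℕ) then 1 else 0) = platW w + 1 := by
  rw [platW_T (SPinsW w g), platW_T w, show 2*(n+1)+1 = 2*n+3 by ring]
  exact SP_T_ins w g 2

lemma SP_row {n : ℕ} (hn : 1 ≤ n) (w : Fin (2*n) → Fin n) (a b c : ℕ) :
    ((univ : Finset (Fin (2*n+1))).filter fun g =>
        ascW (SPinsW w g) = a ∧ desW (SPinsW w g) = b ∧ platW (SPinsW w g) = c).card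
      = (if ascW w = a ∧ desW w + 1 = b ∧ platW w + 1 = c then ascW w else 0)
        + (if ascW w + 1 = a ∧ desW w = b ∧ platW w + 1 = c then desW w else 0)
        + (if ascW w + 1 = a ∧ desW w + 1 = b ∧ platW w = c then platW w else 0) := by
  have key : ∀ g : Fin (2*n+1),
      (ascW (SPinsW w g) = a ∧ desW (SPinsW w g) = b ∧ platW (SPinsW w g) = c)
      ↔ ((SPT 0 (SPpad w) (g:ℕ) ∧ (ascW w = a ∧ desW w + 1 = b ∧ platW w + 1 = c))
        ∨ (SPT 1 (SPpad w) (g:ℕ) ∧ (ascW w + 1 = a ∧ desW w = b ∧ platW w + 1 = c))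
        ∨ (SPT 2 (SPpad w) (g:ℕ) ∧ (ascW w + 1 = a ∧ desW w + 1 = b ∧ platW w = c))) := by
    intro g
    have e0 := ascW_ins hn w g
    have e1 := desW_ins w g
    have e2 := platW_ins w g
    rcases SPT_cases (SPpad w) (g:ℕ) with ⟨h0, h1, h2⟩ | ⟨h0, h1, h2⟩ | ⟨h0, h1, h2⟩
    · rw [if_pos h0] at e0; rw [if_neg h1] at e1; rw [if_neg h2] at e2
      simp only [h0, h1, h2, true_and, false_and, false_or, or_false]
      omega
    · rw [if_neg h0] at e0; rw [if_pos h1] at e1; rw [if_neg h2] at e2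
      simp only [h0, h1, h2, true_and, false_and, false_or, or_false]
      omega
    · rw [if_neg h0] at e0; rw [if_neg h1] at e1; rw [if_pos h2] at e2
      simp only [h0, h1, h2, true_and, false_and, false_or, or_false]
      omega
  rw [Finset.filter_congr (fun g _ => key g), Finset.filter_or, Finset.filter_or,
    Finset.card_union_of_disjoint, Finset.card_union_of_disjoint]
  · refine (congrArg₂ (· + ·) ?_ (congrArg₂ (· + ·) ?_ ?_)).trans
      (by ring :
        (if ascW w = a ∧ desW w + 1 = b ∧ platW w + 1 = c then ascW w else 0)
        + ((if ascW w + 1 = a ∧ desW w = b ∧ platW w + 1 = c then desW w else 0)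
          + (if ascW w + 1 = a ∧ desW w + 1 = b ∧ platW w = c then platW w else 0)) = _)
    · by_cases hc : ascW w = a ∧ desW w + 1 = b ∧ platW w + 1 = c
      · rw [if_pos hc]
        conv_rhs => rw [ascW_T (by omega : 1 ≤ 2*n) w, ← SP_card_fin]
        congr 1
        exact Finset.filter_congr (fun x _ => by simp [hc])
      · rw [if_neg hc, Finset.card_eq_zero, Finset.filter_eq_empty_iff]
        exact fun g _ hh => hc hh.2
    · by_cases hc : ascW w + 1 = a ∧ desW w = b ∧ platW w + 1 = c
      · rw [if_pos hc]
        conv_rhs => rw [desW_T w, ← SP_card_fin]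
        congr 1
        exact Finset.filter_congr (fun x _ => by simp [hc])
      · rw [if_neg hc, Finset.card_eq_zero, Finset.filter_eq_empty_iff]
        exact fun g _ hh => hc hh.2
    · by_cases hc : ascW w + 1 = a ∧ desW w + 1 = b ∧ platW w = c
      · rw [if_pos hc]
        conv_rhs => rw [platW_T w, ← SP_card_fin]
        congr 1
        exact Finset.filter_congr (fun x _ => by simp [hc])
      · rw [if_neg hc, Finset.card_eq_zero, Finset.filter_eq_empty_iff]
        exact fun g _ hh => hc hh.2
  · rw [Finset.disjoint_left]
    intro g hg1 hg2
    rw [Finset.mem_filter] at hg1 hg2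
    rcases SPT_cases (SPpad w) (g:ℕ) with ⟨h0,h1,h2⟩|⟨h0,h1,h2⟩|⟨h0,h1,h2⟩ <;> tauto
  · rw [Finset.disjoint_left]
    intro g hg1 hg2
    rw [Finset.mem_filter] at hg1
    rw [Finset.mem_union, Finset.mem_filter, Finset.mem_filter] at hg2
    rcases SPT_cases (SPpad w) (g:ℕ) with ⟨h0,h1,h2⟩|⟨h0,h1,h2⟩|⟨h0,h1,h2⟩ <;> tauto

/-! ### values of the inserted word -/

def SPb (g x : ℕ) : ℕ := if x < g then x else x - 2

lemma SPinsW_val_lt {n : ℕ} (w : Fin (2*n) → Fin n) (g : Fin (2*n+1))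
    (i : Fin (2*(n+1))) (h : (i:ℕ) < (g:ℕ)) :
    SPinsW w g i = (w ⟨(i:ℕ), by have := g.isLt; omega⟩).castSucc := dif_pos h

lemma SPinsW_val_mid {n : ℕ} (w : Fin (2*n) → Fin n) (g : Fin (2*n+1))
    (i : Fin (2*(n+1))) (h1 : (g:ℕ) ≤ i) (h2 : (i:ℕ) < (g:ℕ)+2) :
    SPinsW w g i = Fin.last n := by
  unfold SPinsW
  rw [dif_neg (by omega), dif_pos h2]

lemma SPinsW_val_ge {n : ℕ} (w : Fin (2*n) → Fin n) (g : Fin (2*n+1))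
    (i : Fin (2*(n+1))) (h : (g:ℕ)+2 ≤ i) :
    SPinsW w g i = (w ⟨(i:ℕ)-2, by have := i.isLt; omega⟩).castSucc := by
  unfold SPinsW
  rw [dif_neg (by omega), dif_neg (by omega)]

def SPbF {n : ℕ} (g : Fin (2*n+1)) (i : Fin (2*(n+1)))
    (h : (i:ℕ) < (g:ℕ) ∨ (g:ℕ)+2 ≤ i) : Fin (2*n) :=
  ⟨SPb (g:ℕ) (i:ℕ), by
    unfold SPb
    have := g.isLt
    have := i.isLt
    split <;> omega⟩

lemma SPinsW_notmid {n : ℕ} (w : Fin (2*n) → Fin n) (g : Fin (2*n+1))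
    (i : Fin (2*(n+1))) (h : (i:ℕ) < (g:ℕ) ∨ (g:ℕ)+2 ≤ i) :
    SPinsW w g i = (w (SPbF g i h)).castSucc := by
  by_cases hlt : (i:ℕ) < (g:ℕ)
  · rw [SPinsW_val_lt w g i hlt]
    exact congrArg Fin.castSucc (congrArg w (Fin.ext (by simp [SPbF, SPb, hlt])))
  · have hge : (g:ℕ)+2 ≤ i := by omega
    rw [SPinsW_val_ge w g i hge]
    exact congrArg Fin.castSucc (congrArg w (Fin.ext (by simp [SPbF, SPb, hlt])))

lemma SPinsW_eq_last_iff {n : ℕ} (w : Fin (2*n) → Fin n) (g : Fin (2*n+1))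
    (i : Fin (2*(n+1))) :
    SPinsW w g i = Fin.last n ↔ ((i:ℕ) = g ∨ (i:ℕ) = (g:ℕ)+1) := by
  constructor
  · intro h
    by_contra hc
    push_neg at hc
    have hnot : (i:ℕ) < (g:ℕ) ∨ (g:ℕ)+2 ≤ i := by omega
    rw [SPinsW_notmid w g i hnot] at h
    exact absurd h (Fin.ne_of_lt (Fin.castSucc_lt_last _))
  · intro h
    exact SPinsW_val_mid w g i (by omega) (by omega)

/-! ### occurrence counts after insertion -/

lemma SPpad_le {n N : ℕ} (w : Fin N → Fin n) (j : ℕ) : SPpad w j ≤ n := by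
  unfold SPpad
  split
  · have := (w ⟨j, by assumption⟩).isLt; omega
  · omega

lemma SP_occ_ins_castSucc {n : ℕ} (w : Fin (2*n) → Fin n) (g : Fin (2*n+1)) (a : Fin n) :
    ((univ : Finset (Fin (2*(n+1)))).filter fun i => SPinsW w g i = a.castSucc).card
      = ((univ : Finset (Fin (2*n))).filter fun i => w i = a).card := by
  rw [SP_occ_T, SP_occ_T]
  rw [SPpad_ins]
  have hcast : ((a.castSucc : Fin (n+1)) : ℕ) = (a : ℕ) := rfl
  rw [hcast]
  have hgl := g.isLt
  have h2 : (2*(n+1)) = (2*n) + 2 := by ring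
  rw [h2, SP_split _ (g:ℕ) 2 (2*n+2) (by omega),
    SP_split (fun j => SPpad w j = (a:ℕ)+1) (g:ℕ) 0 (2*n) (by omega)]
  have hmid : ((Ico (g:ℕ) ((g:ℕ)+2)).filter
      fun j => SPins (SPpad w) (g:ℕ) (n+1) j = (a:ℕ)+1).card = 0 := by
    rw [Finset.card_eq_zero, Finset.filter_eq_empty_iff]
    intro j hj
    rw [Finset.mem_Ico] at hj
    rw [SPins_mid _ _ _ j hj.1 hj.2]
    have := a.isLt
    omega
  have hmid0 : ((Ico (g:ℕ) ((g:ℕ)+0)).filter fun j => SPpad w j = (a:ℕ)+1).card = 0 := by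
    simp
  have hlow : ((range (g:ℕ)).filter fun j => SPins (SPpad w) (g:ℕ) (n+1) j = (a:ℕ)+1).card
      = ((range (g:ℕ)).filter fun j => SPpad w j = (a:ℕ)+1).card := by
    congr 1
    apply Finset.filter_congr
    intro j hj
    rw [SPins_lt _ _ _ j (Finset.mem_range.1 hj)]
  have hup : ((Ico ((g:ℕ)+2) (2*n+2)).filter
      fun j => SPins (SPpad w) (g:ℕ) (n+1) j = (a:ℕ)+1).card
      = ((Ico ((g:ℕ)+0) (2*n)).filter fun j => SPpad w j = (a:ℕ)+1).card := by
    rw [show (2*n+2) = (2*n)+2 from rfl, SP_shift2]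
    congr 1
    apply Finset.filter_congr
    intro j hj
    rw [Finset.mem_Ico] at hj
    have := SPins_ge (SPpad w) (g:ℕ) (n+1) (j+2) (by omega)
    rw [this]
    simp
  rw [hmid, hmid0, hlow, hup]

lemma SP_occ_ins_last {n : ℕ} (w : Fin (2*n) → Fin n) (g : Fin (2*n+1)) :
    ((univ : Finset (Fin (2*(n+1)))).filter fun i => SPinsW w g i = Fin.last n).card = 2 := by
  rw [SP_occ_T, SPpad_ins]
  have hgl := g.isLt
  have hcast : ((Fin.last n : Fin (n+1)) : ℕ) = n := rfl
  rw [hcast, show (2*(n+1)) = (2*n) + 2 by ring, SP_split _ (g:ℕ) 2 (2*n+2) (by omega)]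
  have hlow : ((range (g:ℕ)).filter fun j => SPins (SPpad w) (g:ℕ) (n+1) j = n+1).card = 0 := by
    rw [Finset.card_eq_zero, Finset.filter_eq_empty_iff]
    intro j hj
    rw [SPins_lt _ _ _ j (Finset.mem_range.1 hj)]
    have := SPpad_le w j
    omega
  have hup : ((Ico ((g:ℕ)+2) (2*n+2)).filter
      fun j => SPins (SPpad w) (g:ℕ) (n+1) j = n+1).card = 0 := by
    rw [Finset.card_eq_zero, Finset.filter_eq_empty_iff]
    intro j hj
    rw [Finset.mem_Ico] at hj
    rw [SPins_ge (SPpad w) (g:ℕ) (n+1) j (by omega)]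
    have := SPpad_le w (j-2)
    omega
  have hmid : ((Ico (g:ℕ) ((g:ℕ)+2)).filter
      fun j => SPins (SPpad w) (g:ℕ) (n+1) j = n+1).card = 2 := by
    have he : (Ico (g:ℕ) ((g:ℕ)+2)).filter
        (fun j => SPins (SPpad w) (g:ℕ) (n+1) j = n+1) = Ico (g:ℕ) ((g:ℕ)+2) := by
      apply Finset.filter_true_of_mem
      intro j hj
      rw [Finset.mem_Ico] at hj
      rw [SPins_mid _ _ _ j hj.1 hj.2]
    rw [he, Nat.card_Ico]
    omega
  rw [hlow, hup, hmid]

/-! ### Stirling membership transfer -/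

lemma SPbF_mono {n : ℕ} (g : Fin (2*n+1)) (i j : Fin (2*(n+1)))
    (hi : (i:ℕ) < (g:ℕ) ∨ (g:ℕ)+2 ≤ i) (hj : (j:ℕ) < (g:ℕ) ∨ (g:ℕ)+2 ≤ j)
    (hij : i < j) : SPbF g i hi < SPbF g j hj := by
  have h := Fin.lt_def.1 hij
  rw [Fin.lt_def]
  show SPb (g:ℕ) (i:ℕ) < SPb (g:ℕ) (j:ℕ)
  unfold SPb
  split <;> split <;> omega

def SPpm (g x : ℕ) : ℕ := if x < g then x else x + 2

lemma SPinsW_pm {n : ℕ} (w : Fin (2*n) → Fin n) (g : Fin (2*n+1)) (x : Fin (2*n)) :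
    SPinsW w g ⟨SPpm (g:ℕ) (x:ℕ), by unfold SPpm; have := x.isLt; split <;> omega⟩
      = (w x).castSucc := by
  by_cases h : (x:ℕ) < (g:ℕ)
  · have hv : SPpm (g:ℕ) (x:ℕ) = (x:ℕ) := if_pos h
    rw [SPinsW_val_lt w g _ (by simpa [hv] using h)]
    exact congrArg Fin.castSucc (congrArg w (Fin.ext (by simp [hv])))
  · have hv : SPpm (g:ℕ) (x:ℕ) = (x:ℕ) + 2 := if_neg h
    rw [SPinsW_val_ge w g _ (by simp only [hv]; omega)]
    exact congrArg Fin.castSucc (congrArg w (Fin.ext (by simp [hv])))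

lemma SP_pattern_iff {n : ℕ} (w : Fin (2*n) → Fin n) (g : Fin (2*n+1)) :
    (∀ i j l : Fin (2*(n+1)), i < j → j < l → SPinsW w g i = SPinsW w g l →
        ¬ SPinsW w g j < SPinsW w g i)
      ↔ (∀ i j l : Fin (2*n), i < j → j < l → w i = w l → ¬ w j < w i) := by
  constructor
  · intro H i j l hij hjl heq
    intro hlt
    have pmlt : ∀ x y : Fin (2*n), x < y →
        (⟨SPpm (g:ℕ) (x:ℕ), by unfold SPpm; have := x.isLt; split <;> omega⟩ :
          Fin (2*(n+1)))
        < ⟨SPpm (g:ℕ) (y:ℕ), by unfold SPpm; have := y.isLt; split <;> omega⟩ := by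
      intro x y hxy
      have := Fin.lt_def.1 hxy
      rw [Fin.lt_def]
      show SPpm (g:ℕ) (x:ℕ) < SPpm (g:ℕ) (y:ℕ)
      unfold SPpm
      split <;> split <;> omega
    refine H _ _ _ (pmlt i j hij) (pmlt j l hjl) ?_ ?_
    · rw [SPinsW_pm, SPinsW_pm, heq]
    · rw [SPinsW_pm, SPinsW_pm]
      exact Fin.castSucc_lt_castSucc_iff.2 hlt
  · intro H i j l hij hjl heq hlt
    by_cases hi : SPinsW w g i = Fin.last n
    · have hl : SPinsW w g l = Fin.last n := heq ▸ hi
      rw [SPinsW_eq_last_iff] at hi hl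
      have h1 := Fin.lt_def.1 hij
      have h2 := Fin.lt_def.1 hjl
      omega
    · have hinot : (i:ℕ) < (g:ℕ) ∨ (g:ℕ)+2 ≤ i := by
        by_contra hc
        exact hi ((SPinsW_eq_last_iff w g i).2 (by omega))
      have hl : SPinsW w g l ≠ Fin.last n := fun hc => hi (heq.trans hc)
      have hlnot : (l:ℕ) < (g:ℕ) ∨ (g:ℕ)+2 ≤ l := by
        by_contra hc
        exact hl ((SPinsW_eq_last_iff w g l).2 (by omega))
      by_cases hjmid : SPinsW w g j = Fin.last n
      · rw [SPinsW_notmid w g i hinot, hjmid] at hlt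
        exact absurd hlt (Fin.not_lt.2 (Fin.le_last _))
      · have hjnot : (j:ℕ) < (g:ℕ) ∨ (g:ℕ)+2 ≤ j := by
          by_contra hc
          exact hjmid ((SPinsW_eq_last_iff w g j).2 (by omega))
        rw [SPinsW_notmid w g i hinot, SPinsW_notmid w g l hlnot] at heq
        rw [SPinsW_notmid w g j hjnot, SPinsW_notmid w g i hinot] at hlt
        exact H _ _ _ (SPbF_mono g i j hinot hjnot hij) (SPbF_mono g j l hjnot hlnot hjl)
          (Fin.castSucc_inj.1 heq) (Fin.castSucc_lt_castSucc_iff.1 hlt)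

lemma SPinsW_mem_iff {n : ℕ} (w : Fin (2*n) → Fin n) (g : Fin (2*n+1)) :
    SPinsW w g ∈ stirlingSet (n+1) ↔ w ∈ stirlingSet n := by
  unfold stirlingSet
  rw [Finset.mem_filter, Finset.mem_filter]
  simp only [Finset.mem_univ, true_and]
  constructor
  · rintro ⟨hocc, hpat⟩
    constructor
    · intro a
      rw [← SP_occ_ins_castSucc w g a]
      exact hocc a.castSucc
    · exact (SP_pattern_iff w g).1 hpat
  · rintro ⟨hocc, hpat⟩
    constructor
    · intro a
      induction a using Fin.lastCases with
      | last => exact SP_occ_ins_last w g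
      | cast a => rw [SP_occ_ins_castSucc w g a]; exact hocc a
    · exact (SP_pattern_iff w g).2 hpat

/-! ### injectivity and surjectivity of insertion -/

lemma SPinsW_inj_g {n : ℕ} (w w' : Fin (2*n) → Fin n) (g g' : Fin (2*n+1))
    (h : SPinsW w g = SPinsW w' g') : g = g' := by
  have hgl := g.isLt
  have hgl' := g'.isLt
  have h1 : SPinsW w g ⟨(g:ℕ), by omega⟩ = Fin.last n :=
    SPinsW_val_mid w g _ (by simp) (by simp)
  have h2 : SPinsW w' g' ⟨(g':ℕ), by omega⟩ = Fin.last n :=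
    SPinsW_val_mid w' g' _ (by simp) (by simp)
  rw [h] at h1
  rw [← h] at h2
  rw [SPinsW_eq_last_iff] at h1 h2
  simp only [] at h1 h2
  exact Fin.ext (by omega)

lemma SPinsW_inj_w {n : ℕ} (w w' : Fin (2*n) → Fin n) (g : Fin (2*n+1))
    (h : SPinsW w g = SPinsW w' g) : w = w' := by
  funext x
  have h1 := congrFun h ⟨SPpm (g:ℕ) (x:ℕ), by unfold SPpm; have := x.isLt; split <;> omega⟩
  rw [SPinsW_pm, SPinsW_pm] at h1
  exact Fin.castSucc_inj.1 h1

lemma SPinsW_surj {n : ℕ} (u : Fin (2*(n+1)) → Fin (n+1)) (hu : u ∈ stirlingSet (n+1)) :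
    ∃ (w : Fin (2*n) → Fin n) (g : Fin (2*n+1)), SPinsW w g = u := by
  rw [stirlingSet, Finset.mem_filter] at hu
  obtain ⟨-, hocc, hpat⟩ := hu
  have hcard := hocc (Fin.last n)
  obtain ⟨p', q', hne, hs'⟩ := Finset.card_eq_two.1 hcard
  -- order them
  have main : ∀ p q : Fin (2*(n+1)), p < q →
      (univ.filter fun i => u i = Fin.last n) = {p, q} →
      ∃ (w : Fin (2*n) → Fin n) (g : Fin (2*n+1)), SPinsW w g = u := by
    intro p q hpq hs
    have hchar : ∀ z, u z = Fin.last n ↔ (z = p ∨ z = q) := by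
      intro z
      constructor
      · intro hz
        have hm : z ∈ Finset.filter (fun i => u i = Fin.last n) univ :=
          Finset.mem_filter.2 ⟨Finset.mem_univ z, hz⟩
        rw [hs, Finset.mem_insert, Finset.mem_singleton] at hm
        exact hm
      · intro hz
        have hm : z ∈ ({p, q} : Finset (Fin (2*(n+1)))) := by
          rcases hz with h|h <;> simp [h]
        rw [← hs, Finset.mem_filter] at hm
        exact hm.2
    have hql := q.isLt
    have hpq' := Fin.lt_def.1 hpq
    -- adjacency
    have hadj : (q:ℕ) = (p:ℕ) + 1 := by
      by_contra hc
      have hlt : (p:ℕ)+1 < (q:ℕ) := by omega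
      set j : Fin (2*(n+1)) := ⟨(p:ℕ)+1, by omega⟩ with hj
      by_cases hjl : u j = Fin.last n
      · rcases (hchar j).1 hjl with h|h
        · have hval : (p:ℕ)+1 = (p:ℕ) := by simpa [hj] using congrArg Fin.val h
          omega
        · have hval : (p:ℕ)+1 = (q:ℕ) := by simpa [hj] using congrArg Fin.val h
          omega
      · have hult : u j < Fin.last n := Fin.lt_last_iff_ne_last.2 hjl
        have hup : u p = Fin.last n := (hchar p).2 (Or.inl rfl)
        have huq : u q = Fin.last n := (hchar q).2 (Or.inr rfl)
        refine hpat p j q ?_ ?_ (hup.trans huq.symm) ?_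
        · rw [Fin.lt_def]; simp [hj]
        · rw [Fin.lt_def]; simp [hj]; omega
        · rw [hup]; exact hult
    have hpl : (p:ℕ) < 2*n+1 := by omega
    set g : Fin (2*n+1) := ⟨(p:ℕ), hpl⟩ with hg
    have hpos : ∀ x : Fin (2*n), SPpm (p:ℕ) (x:ℕ) < 2*(n+1) := fun x => by
      unfold SPpm; have := x.isLt; split <;> omega
    have hnl : ∀ x : Fin (2*n), u ⟨SPpm (p:ℕ) (x:ℕ), hpos x⟩ ≠ Fin.last n := by
      intro x hc
      rcases (hchar _).1 hc with h|h
      · have := congrArg Fin.val h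
        simp only [SPpm] at this
        split at this <;> omega
      · have := congrArg Fin.val h
        simp only [SPpm] at this
        split at this <;> omega
    refine ⟨fun x => (u ⟨SPpm (p:ℕ) (x:ℕ), hpos x⟩).castPred (hnl x), g, ?_⟩
    have hgv : ((g : Fin (2*n+1)) : ℕ) = (p:ℕ) := rfl
    funext i
    have hil := i.isLt
    by_cases h1 : (i:ℕ) < (p:ℕ)
    · rw [SPinsW_val_lt _ g i (by rw [hgv]; exact h1)]
      have harg : (⟨SPpm (p:ℕ) ((⟨(i:ℕ), by have := g.isLt; rw [hgv] at *; omega⟩ :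
          Fin (2*n)):ℕ), hpos _⟩ : Fin (2*(n+1))) = i :=
        Fin.ext (by simp [SPpm, h1])
      simp only [harg]
      exact Fin.castSucc_castPred _ _
    · by_cases h2 : (i:ℕ) < (p:ℕ)+2
      · rw [SPinsW_val_mid _ g i (by omega) (by rw [hgv]; omega)]
        have hor : i = p ∨ i = q := by
          by_cases hip : (i:ℕ) = (p:ℕ)
          · exact Or.inl (Fin.ext hip)
          · exact Or.inr (Fin.ext (by omega))
        exact ((hchar i).2 hor).symm
      · rw [SPinsW_val_ge _ g i (by rw [hgv]; omega)]
        have harg : (⟨SPpm (p:ℕ) ((⟨(i:ℕ)-2, by rw [hgv] at *; omega⟩ :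
            Fin (2*n)):ℕ), hpos _⟩ : Fin (2*(n+1))) = i :=
          Fin.ext (by simp [SPpm]; split <;> omega)
        simp only [harg]
        exact Fin.castSucc_castPred _ _
  rcases lt_or_gt_of_ne hne with h|h
  · exact main p' q' h hs'
  · refine main q' p' h ?_
    rw [hs']
    exact Finset.pair_comm p' q'

/-! ### decomposition and recurrence -/

lemma SP_stirling_succ {n : ℕ} :
    stirlingSet (n+1) = (stirlingSet n).biUnion
      (fun w => (univ : Finset (Fin (2*n+1))).image (SPinsW w)) := by
  ext u
  rw [Finset.mem_biUnion]
  constructor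
  · intro hu
    obtain ⟨w, g, he⟩ := SPinsW_surj u hu
    exact ⟨w, (SPinsW_mem_iff w g).1 (he ▸ hu),
      Finset.mem_image.2 ⟨g, Finset.mem_univ g, he⟩⟩
  · rintro ⟨w, hw, hu⟩
    obtain ⟨g, -, he⟩ := Finset.mem_image.1 hu
    exact he ▸ (SPinsW_mem_iff w g).2 hw

noncomputable def SPf (n a b c : ℕ) : ℕ :=
  ((stirlingSet n).filter fun w => ascW w = a ∧ desW w = b ∧ platW w = c).card

lemma SP_sum_if {n : ℕ} (S : Finset (Fin (2*n) → Fin n)) (Q : (Fin (2*n) → Fin n) → Prop)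
    [DecidablePred Q] (v : ℕ) : ∑ w ∈ S, (if Q w then v else 0) = v * (S.filter Q).card := by
  classical
  rw [← Finset.sum_filter, Finset.sum_const, smul_eq_mul, mul_comm]

lemma SP_rec {n : ℕ} (hn : 1 ≤ n) (a b c : ℕ) :
    SPf (n+1) a b c
      = (if 1 ≤ b ∧ 1 ≤ c then a * SPf n a (b-1) (c-1) else 0)
      + (if 1 ≤ a ∧ 1 ≤ c then b * SPf n (a-1) b (c-1) else 0)
      + (if 1 ≤ a ∧ 1 ≤ b then c * SPf n (a-1) (b-1) c else 0) := by
  unfold SPf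
  rw [SP_stirling_succ, Finset.filter_biUnion, Finset.card_biUnion]
  · have hterm : ∀ w ∈ stirlingSet n,
        (((univ : Finset (Fin (2*n+1))).image (SPinsW w)).filter fun u =>
          ascW u = a ∧ desW u = b ∧ platW u = c).card
        = (if ascW w = a ∧ desW w + 1 = b ∧ platW w + 1 = c then ascW w else 0)
          + (if ascW w + 1 = a ∧ desW w = b ∧ platW w + 1 = c then desW w else 0)
          + (if ascW w + 1 = a ∧ desW w + 1 = b ∧ platW w = c then platW w else 0) := by
      intro w _
      rw [Finset.filter_image, Finset.card_image_of_injective _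
        (fun g g' h => SPinsW_inj_g w w g g' h), ← SP_row hn w a b c]
    rw [Finset.sum_congr rfl hterm, Finset.sum_add_distrib, Finset.sum_add_distrib]
    congr 1
    congr 1
    · -- first summand
      by_cases hbc : 1 ≤ b ∧ 1 ≤ c
      · rw [if_pos hbc]
        have hpt : ∀ w ∈ stirlingSet n,
            (if ascW w = a ∧ desW w + 1 = b ∧ platW w + 1 = c then ascW w else 0)
            = (if ascW w = a ∧ desW w = b-1 ∧ platW w = c-1 then a else 0) := by
          intro w _
          by_cases hP : ascW w = a ∧ desW w + 1 = b ∧ platW w + 1 = c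
          · rw [if_pos hP, if_pos ⟨hP.1, by omega, by omega⟩]
            exact hP.1
          · rw [if_neg hP, if_neg (fun hQ => hP ⟨hQ.1, by omega, by omega⟩)]
        rw [Finset.sum_congr rfl hpt, SP_sum_if]
      · rw [if_neg hbc]
        apply Finset.sum_eq_zero
        intro w _
        rw [if_neg (fun hP => hbc (by omega))]
    · by_cases hac : 1 ≤ a ∧ 1 ≤ c
      · rw [if_pos hac]
        have hpt : ∀ w ∈ stirlingSet n,
            (if ascW w + 1 = a ∧ desW w = b ∧ platW w + 1 = c then desW w else 0)
            = (if ascW w = a-1 ∧ desW w = b ∧ platW w = c-1 then b else 0) := by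
          intro w _
          by_cases hP : ascW w + 1 = a ∧ desW w = b ∧ platW w + 1 = c
          · rw [if_pos hP, if_pos ⟨by omega, hP.2.1, by omega⟩]
            exact hP.2.1
          · rw [if_neg hP, if_neg (fun hQ => hP ⟨by omega, hQ.2.1, by omega⟩)]
        rw [Finset.sum_congr rfl hpt, SP_sum_if]
      · rw [if_neg hac]
        apply Finset.sum_eq_zero
        intro w _
        rw [if_neg (fun hP => hac (by omega))]
    · by_cases hab : 1 ≤ a ∧ 1 ≤ b
      · rw [if_pos hab]
        have hpt : ∀ w ∈ stirlingSet n,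
            (if ascW w + 1 = a ∧ desW w + 1 = b ∧ platW w = c then platW w else 0)
            = (if ascW w = a-1 ∧ desW w = b-1 ∧ platW w = c then c else 0) := by
          intro w _
          by_cases hP : ascW w + 1 = a ∧ desW w + 1 = b ∧ platW w = c
          · rw [if_pos hP, if_pos ⟨by omega, by omega, hP.2.2⟩]
            exact hP.2.2
          · rw [if_neg hP, if_neg (fun hQ => hP ⟨by omega, by omega, hQ.2.2⟩)]
        rw [Finset.sum_congr rfl hpt, SP_sum_if]
      · rw [if_neg hab]
        apply Finset.sum_eq_zero
        intro w _
        rw [if_neg (fun hP => hab (by omega))]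
  · -- disjointness
    intro w1 h1 w2 h2 hne
    simp only [Function.onFun]
    rw [Finset.disjoint_left]
    intro u hu1 hu2
    rw [Finset.mem_filter, Finset.mem_image] at hu1 hu2
    obtain ⟨⟨g1, -, he1⟩, -⟩ := hu1
    obtain ⟨⟨g2, -, he2⟩, -⟩ := hu2
    have hg : g1 = g2 := SPinsW_inj_g w1 w2 g1 g2 (he1.trans he2.symm)
    subst hg
    exact hne (SPinsW_inj_w w1 w2 g1 (he1.trans he2.symm))

/-! ### base case n = 1 -/

lemma SP_base (a b c : ℕ) : SPf 1 a b c = if a = 1 ∧ b = 1 ∧ c = 1 then 1 else 0 := by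
  have hsub : ∀ (w : Fin (2*1) → Fin 1) (x y : Fin (2*1)), ¬ w x < w y := by
    intro w x y h
    have he : w x = w y := Subsingleton.elim _ _
    rw [he] at h
    exact lt_irrefl _ h
  have hstir : stirlingSet 1 = univ := by
    apply Finset.eq_univ_iff_forall.2
    intro w
    rw [stirlingSet, Finset.mem_filter]
    refine ⟨Finset.mem_univ w, ?_, ?_⟩
    · intro a'
      have he : (univ.filter fun i => w i = a') = univ :=
        Finset.filter_true_of_mem (fun i _ => Subsingleton.elim _ _)
      rw [he, Finset.card_univ]
      simp
    · intro i j l _ _ _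
      exact hsub w j i
  have hasc : ∀ w : Fin (2*1) → Fin 1, ascW w = 1 := by
    intro w
    unfold ascW
    rw [Finset.card_eq_one]
    refine ⟨⟨0, by omega⟩, ?_⟩
    ext i
    simp only [Finset.mem_filter, Finset.mem_univ, true_and, Finset.mem_singleton]
    constructor
    · rintro (h | h)
      · exact Fin.ext h
      · exact absurd h (hsub w _ _)
    · intro h
      subst h
      exact Or.inl rfl
  have hdes : ∀ w : Fin (2*1) → Fin 1, desW w = 1 := by
    intro w
    unfold desW
    rw [Finset.card_eq_one]
    refine ⟨⟨1, by omega⟩, ?_⟩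
    ext i
    simp only [Finset.mem_filter, Finset.mem_univ, true_and, Finset.mem_singleton]
    constructor
    · rintro (h | ⟨hh, hlt⟩)
      · exact Fin.ext (show (i:ℕ) = 1 by omega)
      · exact absurd hlt (hsub w _ _)
    · intro h
      subst h
      exact Or.inl (show (1:ℕ)+1 = 2*1 by omega)
  have hplat : ∀ w : Fin (2*1) → Fin 1, platW w = 1 := by
    intro w
    unfold platW
    rw [Finset.card_eq_one]
    refine ⟨⟨0, by omega⟩, ?_⟩
    ext i
    simp only [Finset.mem_filter, Finset.mem_univ, true_and, Finset.mem_singleton]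
    constructor
    · rintro ⟨hh, he⟩
      exact Fin.ext (show (i:ℕ) = 0 by omega)
    · intro h
      subst h
      exact ⟨show (0:ℕ)+1 < 2*1 by omega, Subsingleton.elim _ _⟩
  unfold SPf
  rw [hstir]
  by_cases h : a = 1 ∧ b = 1 ∧ c = 1
  · rw [if_pos h]
    have he : (univ : Finset (Fin (2*1) → Fin 1)).filter
        (fun w => ascW w = a ∧ desW w = b ∧ platW w = c) = univ := by
      apply Finset.filter_true_of_mem
      intro w _
      have h1 := hasc w
      have h2 := hdes w
      have h3 := hplat w
      exact ⟨by omega, by omega, by omega⟩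
    rw [he, Finset.card_univ]
    rw [Fintype.card_eq_one_iff]
    exact ⟨fun _ => 0, fun y => funext fun x => Subsingleton.elim _ _⟩
  · rw [if_neg h, Finset.card_eq_zero, Finset.filter_eq_empty_iff]
    intro w _
    intro hc
    have h1 := hasc w
    have h2 := hdes w
    have h3 := hplat w
    exact h ⟨by omega, by omega, by omega⟩

/-! ### symmetry -/

lemma SP_sym {n : ℕ} (hn : 1 ≤ n) :
    ∀ a b c, SPf n a b c = SPf n b a c ∧ SPf n a b c = SPf n a c b := by
  induction n, hn using Nat.le_induction with
  | base =>
    intro a b c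
    constructor
    · rw [SP_base, SP_base]
      exact if_congr (by tauto) rfl rfl
    · rw [SP_base, SP_base]
      exact if_congr (by tauto) rfl rfl
  | succ n hn ih =>
    intro a b c
    have s12 : ∀ x y z, SPf n x y z = SPf n y x z := fun x y z => (ih x y z).1
    have s23 : ∀ x y z, SPf n x y z = SPf n x z y := fun x y z => (ih x y z).2
    constructor
    · rw [SP_rec hn a b c, SP_rec hn b a c]
      rw [s12 a (b-1) (c-1), s12 b (a-1) (c-1), s12 (b-1) (a-1) c]
      rw [show (if 1 ≤ b ∧ 1 ≤ a then c * SPf n (a-1) (b-1) c else 0)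
          = (if 1 ≤ a ∧ 1 ≤ b then c * SPf n (a-1) (b-1) c else 0) from
        if_congr and_comm rfl rfl]
      ring
    · rw [SP_rec hn a b c, SP_rec hn a c b]
      rw [s23 a (c-1) (b-1), s23 (a-1) c (b-1), s23 (a-1) (c-1) b]
      rw [show (if 1 ≤ c ∧ 1 ≤ b then a * SPf n a (b-1) (c-1) else 0)
          = (if 1 ≤ b ∧ 1 ≤ c then a * SPf n a (b-1) (c-1) else 0) from
        if_congr and_comm rfl rfl]
      ring

lemma SP_perm {n : ℕ} (hn : 1 ≤ n) (v : Fin 3 → ℕ) (σ : Equiv.Perm (Fin 3)) :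
    SPf n (v 0) (v 1) (v 2) = SPf n (v (σ 0)) (v (σ 1)) (v (σ 2)) := by
  have s12 : ∀ a b c, SPf n a b c = SPf n b a c := fun a b c => (SP_sym hn a b c).1
  have s23 : ∀ a b c, SPf n a b c = SPf n a c b := fun a b c => (SP_sym hn a b c).2
  have s13 : ∀ a b c, SPf n a b c = SPf n c b a := fun a b c => by
    rw [s12, s23, s12]
  suffices H : ∀ (τ : Equiv.Perm (Fin 3)) (u : Fin 3 → ℕ),
      SPf n (u 0) (u 1) (u 2) = SPf n (u (τ 0)) (u (τ 1)) (u (τ 2)) from H σ v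
  intro τ
  refine Equiv.Perm.swap_induction_on τ (fun u => rfl) ?_
  intro τ x y hxy ih u
  · have hswap : ∀ u' : Fin 3 → ℕ,
        SPf n (u' 0) (u' 1) (u' 2)
          = SPf n (u' (Equiv.swap x y 0)) (u' (Equiv.swap x y 1)) (u' (Equiv.swap x y 2)) := by
      intro u'
      fin_cases x <;> fin_cases y <;>
        first
          | exact absurd rfl hxy
          | exact (show SPf n (u' 0) (u' 1) (u' 2) = SPf n (u' 1) (u' 0) (u' 2) from
              s12 _ _ _)
          | exact (show SPf n (u' 0) (u' 1) (u' 2) = SPf n (u' 2) (u' 1) (u' 0) from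
              s13 _ _ _)
          | exact (show SPf n (u' 0) (u' 1) (u' 2) = SPf n (u' 0) (u' 2) (u' 1) from
              s23 _ _ _)
    calc SPf n (u 0) (u 1) (u 2)
        = SPf n ((u ∘ Equiv.swap x y) 0) ((u ∘ Equiv.swap x y) 1) ((u ∘ Equiv.swap x y) 2) :=
          hswap u
      _ = SPf n ((u ∘ Equiv.swap x y) (τ 0)) ((u ∘ Equiv.swap x y) (τ 1))
            ((u ∘ Equiv.swap x y) (τ 2)) := ih (u ∘ Equiv.swap x y)
      _ = SPf n (u ((Equiv.swap x y * τ) 0)) (u ((Equiv.swap x y * τ) 1))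
            (u ((Equiv.swap x y * τ) 2)) := rfl

/-- The joint distribution of `(asc, des, plat)` on Stirling permutations is
invariant under any permutation of the triple: for every `σ ∈ S_3`, the number
of Stirling permutations with `(asc, des, plat) = (v 0, v 1, v 2)` equals the
number with `(asc, des, plat) = (v (σ 0), v (σ 1), v (σ 2))`. -/
theorem stirling_asc_des_plat_symmetric (n : ℕ) (hn : 1 ≤ n) (v : Fin 3 → ℕ)
    (σ : Equiv.Perm (Fin 3)) :
    ((stirlingSet n).filter fun w => ascW w = v 0 ∧ desW w = v 1 ∧ platW w = v 2).card
      = ((stirlingSet n).filter fun w =>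
          ascW w = v (σ 0) ∧ desW w = v (σ 1) ∧ platW w = v (σ 2)).card := by
  exact SP_perm hn v σ
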